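/- Let V be a commutative quantale. For V-categories (X, α) in the Kleisli-monoid presentation, the convergence structure on the hom-object [X,V] given by conv(φ) = ⋁_{f ∈ [X,V]} φ(f) ⊗ f (pointwise) makes [X,V] into a P_V-algebra; in particular the V-category of V-functors X → V is tensored/cocomplete, recovering that V-Cat is monoidal closed with respect to the tensor product. -/
import Mathlib


universe u

/-- The set of `V`-functors `(X, α) → V`, i.e. maps `f : X → V` with
`⨆ y, α x y * f y ≤ f x` for all `x`. -/
abbrev VHom {V : Type u} [CompleteLattice V] [Mul V] {X : Type u} (α : X → X → V) :
    Type u :=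
  {f : X → V // ∀ x : X, (⨆ y : X, α x y * f y) ≤ f x}

private theorem mul_iSup' {V : Type u} [CompleteLattice V] [CommMonoid V]
    (hdist : ∀ (a : V) (S : Set V), a * sSup S = ⨆ b ∈ S, a * b)
    {ι : Sort*} (a : V) (g : ι → V) :
    a * (⨆ i, g i) = ⨆ i, a * g i := by
  rw [iSup, hdist, iSup_range]

private theorem iSup_mul' {V : Type u} [CompleteLattice V] [CommMonoid V]
    (hdist : ∀ (a : V) (S : Set V), a * sSup S = ⨆ b ∈ S, a * b)
    {ι : Sort*} (a : V) (g : ι → V) :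
    (⨆ i, g i) * a = ⨆ i, g i * a := by
  rw [mul_comm, mul_iSup' hdist]
  exact iSup_congr fun i => mul_comm _ _

private theorem bot_mul' {V : Type u} [CompleteLattice V] [CommMonoid V]
    (hdist : ∀ (a : V) (S : Set V), a * sSup S = ⨆ b ∈ S, a * b)
    (a : V) : (⊥ : V) * a = ⊥ := by
  rw [mul_comm]
  simpa using hdist a ∅

private theorem mul_le_mul_l {V : Type u} [CompleteLattice V] [CommMonoid V]
    (hdist : ∀ (a : V) (S : Set V), a * sSup S = ⨆ b ∈ S, a * b)
    {b c : V} (a : V) (h : b ≤ c) : a * b ≤ a * c := by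
  have h1 : a * sSup {b, c} = ⨆ x ∈ ({b, c} : Set V), a * x := hdist a {b, c}
  have h2 : sSup ({b, c} : Set V) = c := by
    rw [sSup_pair, sup_eq_right.mpr h]
  rw [h2] at h1
  rw [h1]
  simp only [Set.mem_insert_iff, Set.mem_singleton_iff, iSup_or, iSup_iSup_eq_left,
    iSup_sup_eq]
  exact le_sup_left

private theorem mul_le_mul'' {V : Type u} [CompleteLattice V] [CommMonoid V]
    (hdist : ∀ (a : V) (S : Set V), a * sSup S = ⨆ b ∈ S, a * b)
    {a b c d : V} (h1 : a ≤ b) (h2 : c ≤ d) : a * c ≤ b * d :=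
  le_trans (mul_le_mul_l hdist a h2)
    (by rw [mul_comm a d, mul_comm b d]; exact mul_le_mul_l hdist d h1)

/-- The convergence map `conv φ = ⋁_f φ(f) ⊗ f` (pointwise). -/
private def Conv {V : Type u} [CompleteLattice V] [CommMonoid V]
    (hdist : ∀ (a : V) (S : Set V), a * sSup S = ⨆ b ∈ S, a * b)
    {X : Type u} (α : X → X → V)
    (φ : VHom α → V) : VHom α :=
  ⟨fun x => ⨆ f : VHom α, φ f * (f : X → V) x, by
    intro x
    refine iSup_le fun y => ?_
    rw [mul_iSup' hdist]
    refine iSup_le fun f => ?_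
    refine le_trans ?_ (le_iSup (fun f : VHom α => φ f * (f : X → V) x) f)
    rw [mul_left_comm]
    refine mul_le_mul_l hdist _ ?_
    exact le_trans (le_iSup (fun y => α x y * (f : X → V) y) y) (f.2 x)⟩

/-- For a commutative quantale `V` and a `V`-category `(X, α)`, the convergence map
`conv φ = ⋁_f φ(f) ⊗ f` (computed pointwise) makes the hom-object `[X,V]` of
`V`-functors `X → V` into an algebra for the `V`-powerset monad `P_V`: it satisfies
the Eilenberg–Moore laws `conv ∘ η = id` and `conv ∘ P_V conv = conv ∘ μ`. This
recovers that `V`-Cat is monoidal closed for the tensor product. -/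
theorem vcat_hom_is_pv_algebra {V : Type u} [CompleteLattice V] [CommMonoid V]
    (hdist : ∀ (a : V) (S : Set V), a * sSup S = ⨆ b ∈ S, a * b)
    {X : Type u} (α : X → X → V)
    (hrefl : ∀ x : X, (1 : V) ≤ α x x)
    (htrans : ∀ x y z : X, α x y * α y z ≤ α x z) :
    ∃ conv : (VHom α → V) → VHom α,
      (∀ (φ : VHom α → V) (x : X),
        ((conv φ : VHom α) : X → V) x = ⨆ f : VHom α, φ f * (f : X → V) x) ∧
      (∀ f : VHom α, conv (fun g => ⨆ _ : g = f, (1 : V)) = f) ∧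
      (∀ Φ : (VHom α → V) → V,
        conv (fun g => ⨆ φ : {φ : VHom α → V // conv φ = g}, Φ φ.1) =
          conv (fun g => ⨆ φ : VHom α → V, Φ φ * φ g)) := by
  refine ⟨Conv hdist α, fun φ x => rfl, ?_, ?_⟩
  · -- unit law
    intro f
    refine Subtype.ext (funext fun x => ?_)
    show (⨆ g : VHom α, (⨆ _ : g = f, (1 : V)) * (g : X → V) x) = (f : X → V) x
    apply le_antisymm
    · refine iSup_le fun g => ?_
      by_cases h : g = f
      · subst h; simp
      · simp [h, bot_mul' hdist]
    · refine le_trans ?_ (le_iSup (fun g : VHom α => (⨆ _ : g = f, (1:V)) * (g : X → V) x) f)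
      simp
  · -- multiplication law
    intro Φ
    refine Subtype.ext (funext fun x => ?_)
    show (⨆ g : VHom α, (⨆ φ : {φ : VHom α → V // Conv hdist α φ = g}, Φ φ.1) * (g : X → V) x)
       = ⨆ g : VHom α, (⨆ φ : VHom α → V, Φ φ * φ g) * (g : X → V) x
    apply le_antisymm
    · refine iSup_le fun g => ?_
      rw [iSup_mul' hdist]
      refine iSup_le fun φ => ?_
      obtain ⟨φ, rfl⟩ := φ
      show Φ φ * (⨆ f : VHom α, φ f * (f : X → V) x) ≤ _
      rw [mul_iSup' hdist]
      refine iSup_le fun f => ?_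
      refine le_trans ?_
        (le_iSup (fun g : VHom α => (⨆ ψ : VHom α → V, Φ ψ * ψ g) * (g : X → V) x) f)
      rw [← mul_assoc]
      exact mul_le_mul'' hdist (le_iSup (fun ψ : VHom α → V => Φ ψ * ψ f) φ) le_rfl
    · refine iSup_le fun f => ?_
      rw [iSup_mul' hdist]
      refine iSup_le fun φ => ?_
      refine le_trans ?_
        (le_iSup (fun g : VHom α =>
          (⨆ ψ : {ψ : VHom α → V // Conv hdist α ψ = g}, Φ ψ.1) * (g : X → V) x)
          (Conv hdist α φ))
      rw [mul_assoc]
      refine mul_le_mul'' hdist ?_ ?_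
      · exact le_iSup (fun ψ : {ψ : VHom α → V // Conv hdist α ψ = Conv hdist α φ} => Φ ψ.1)
          ⟨φ, rfl⟩
      · exact le_iSup (fun h : VHom α => φ h * (h : X → V) x) f
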